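/- Identifiability of the judge-aware BTL model: Let N ≥ 2 and K ≥ 1. Suppose s, s̃ : Fin N → ℝ and γ, γ̃ : Fin K → ℝ with γ_k ≠ 0 and γ̃_k ≠ 0 for all k, and suppose there exist indices i₀ ≠ j₀ with s_{i₀} ≠ s_{j₀}. If γ_k (s_i − s_j) = γ̃_k (s̃_i − s̃_j) for all i ≠ j and all k, then there exist a ∈ ℝ \ {0} and b ∈ ℝ such that s̃_i = a·s_i + b for all i and γ̃_k = γ_k / a for all k. -/

import Mathlib

theorem judge_aware_BTL_identifiability (N K : ℕ) (hN : 2 ≤ N) (hK : 1 ≤ K)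
    (s s' : Fin N → ℝ) (γ γ' : Fin K → ℝ)
    (hγ : ∀ k, γ k ≠ 0) (hγ' : ∀ k, γ' k ≠ 0)
    (i₀ j₀ : Fin N) (hij : i₀ ≠ j₀) (hs : s i₀ ≠ s j₀)
    (h : ∀ i j : Fin N, i ≠ j → ∀ k : Fin K,
      γ k * (s i - s j) = γ' k * (s' i - s' j)) :
    ∃ a b : ℝ, a ≠ 0 ∧ (∀ i, s' i = a * s i + b) ∧ (∀ k, γ' k = γ k / a) := by
  have k₀ : Fin K := ⟨0, hK⟩
  set d := s i₀ - s j₀ with hd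
  set d' := s' i₀ - s' j₀ with hd'
  have hdne : d ≠ 0 := sub_ne_zero.mpr hs
  have hkey : γ k₀ * d = γ' k₀ * d' := h i₀ j₀ hij k₀
  have hd'ne : d' ≠ 0 := by
    intro h0
    rw [h0, mul_zero] at hkey
    exact (mul_ne_zero (hγ k₀) hdne) hkey
  set a := d' / d with ha
  have hane : a ≠ 0 := div_ne_zero hd'ne hdne
  -- γ' k = γ k / a for all k
  have hγq : ∀ k, γ' k = γ k / a := by
    intro k
    have hk : γ k * d = γ' k * d' := h i₀ j₀ hij k
    field_simp [ha]
    rw [ha, mul_div_assoc', div_eq_iff hdne]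
    linarith [hk]
  refine ⟨a, s' i₀ - a * s i₀, hane, ?_, hγq⟩
  intro i
  by_cases hi : i = i₀
  · subst hi; ring
  · have hk : γ k₀ * (s i - s i₀) = γ' k₀ * (s' i - s' i₀) := h i i₀ hi k₀
    rw [hγq k₀] at hk
    have : γ k₀ * (s i - s i₀) = γ k₀ / a * (s' i - s' i₀) := hk
    have h2 : a * (s i - s i₀) = s' i - s' i₀ := by
      field_simp at this
      have h3 := mul_left_cancel₀ (hγ k₀)
        (show γ k₀ * ((s i - s i₀) * a) = γ k₀ * (s' i - s' i₀) by linarith)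
      linarith [mul_comm (s i - s i₀) a, h3]
    linarith
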